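/- arXiv:2103.09443 — 2 statements merged into one kernel-verified Lean document; each statement's English description precedes it below -/
import Mathlib

section
/- Let ω be a word with b distinct letters such that |Π(ω)|/n^{b+1} → 1 as n → ∞. If x_1, x_2, …, x_m (m ≥ 1) are the letters occupying the positions strictly between two successive occurrences of a letter y in ω, then x_1, …, x_m cannot all be distinct; i.e., at least one letter appears more than once among them. -/
open MeasureTheory ProbabilityTheory Filter Finset
open scoped BigOperators ENNReal NNReal Topology Classical
open Fin.NatCast

noncomputable section

/-- The empirical spectral distribution of a matrix: `(1/n) ∑ δ_{λ_i}` where the `λ_i`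
are the eigenvalues (for a Hermitian, i.e. real symmetric, matrix); junk value `0`
for non-Hermitian matrices. -/
noncomputable def esdOfMatrix {n : ℕ} (A : Matrix (Fin n) (Fin n) ℝ) : Measure ℝ :=
  if h : A.IsHermitian then ((n : ℝ≥0∞))⁻¹ • ∑ i : Fin n, Measure.dirac (h.eigenvalues i)
  else 0

/-- Weak convergence of a sequence of measures on `ℝ`. -/
def WeakLim (μs : ℕ → Measure ℝ) (ν : Measure ℝ) : Prop :=
  ∀ f : BoundedContinuousFunction ℝ ℝ,
    Tendsto (fun n => ∫ t, f t ∂(μs n)) atTop (𝓝 (∫ t, f t ∂ν))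

/-- `P` is a partition of `{1, …, m}`. -/
def IsPartitionOf (m : ℕ) (P : Finset (Finset ℕ)) : Prop :=
  (∀ B ∈ P, B.Nonempty) ∧ (∀ B ∈ P, B ⊆ Finset.Icc 1 m) ∧
  (∀ B ∈ P, ∀ B' ∈ P, B ≠ B' → Disjoint B B') ∧
  (∀ i ∈ Finset.Icc 1 m, ∃ B ∈ P, i ∈ B)

/-- The block of the partition `P` containing `a` (junk value `∅` if there is none). -/
noncomputable def partOf (P : Finset (Finset ℕ)) (a : ℕ) : Finset ℕ :=
  (P.filter fun B => a ∈ B).sup id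

/-- `B` is a union of pairwise disjoint sets of consecutive integers, each of even size. -/
def IsEvenIntervalUnion (B : Finset ℕ) : Prop :=
  ∃ S : Finset (ℕ × ℕ),
    (∀ p ∈ S, p.1 ≤ p.2 ∧ Even (Finset.Icc p.1 p.2).card) ∧
    (∀ p ∈ S, ∀ q ∈ S, p ≠ q → Disjoint (Finset.Icc p.1 p.2) (Finset.Icc q.1 q.2)) ∧
    B = S.sup fun p => Finset.Icc p.1 p.2

/-- A partition of `{1, …, m}` is special symmetric if (i) its last block (the block whose
least element is the largest) is a union of even-sized sets of consecutive integers, and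
(ii) between any two successive elements of any block, any other block has an even number
of elements, appearing an equal number of times in odd and in even positions. -/
def IsSpecialSymmetric (m : ℕ) (P : Finset (Finset ℕ)) : Prop :=
  IsPartitionOf m P ∧
  (∀ B ∈ P, (∀ B' ∈ P, B' ≠ B → ∃ a ∈ B', ∀ c ∈ B, a < c) → IsEvenIntervalUnion B) ∧
  (∀ B ∈ P, ∀ i ∈ B, ∀ j ∈ B, i < j → (∀ l ∈ B, ¬(i < l ∧ l < j)) →
    ∀ B' ∈ P, B' ≠ B →
      Even ((B'.filter fun l => i < l ∧ l < j).card) ∧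
      (B'.filter fun l => i < l ∧ l < j ∧ Odd l).card
        = (B'.filter fun l => i < l ∧ l < j ∧ Even l).card)

/-- The finite set of all partitions of `{1, …, m}`. -/
noncomputable def partitionFinset (m : ℕ) : Finset (Finset (Finset ℕ)) :=
  ((Finset.Icc 1 m).powerset.powerset).filter (IsPartitionOf m)

/-- The finite set `SS(m)` of special symmetric partitions of `{1, …, m}`. -/
noncomputable def SSFinset (m : ℕ) : Finset (Finset (Finset ℕ)) :=
  ((Finset.Icc 1 m).powerset.powerset).filter (IsSpecialSymmetric m)

/-- The finite set `SS_b(m)`: special symmetric partitions of `{1, …, m}` with `b` blocks. -/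
noncomputable def SSbFinset (m b : ℕ) : Finset (Finset (Finset ℕ)) :=
  (SSFinset m).filter fun P => P.card = b

/-- The positions in `{1, …, m}` of first occurrences of the letters of the word of `P`. -/
noncomputable def firstOccs (m : ℕ) (P : Finset (Finset ℕ)) : Finset ℕ :=
  (Finset.Icc 1 m).filter fun i => ∀ i' ∈ Finset.Icc 1 m, i' < i → partOf P i' ≠ partOf P i

/-- The position `i_j` of the first occurrence of the `j`-th distinct letter (`1`-indexed)
of the word of the partition `P`. -/
noncomputable def iPos (m : ℕ) (P : Finset (Finset ℕ)) (j : ℕ) : ℕ :=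
  ((firstOccs m P).sort (· ≤ ·)).getD (j - 1) 0

/-- The basic identifications of the vertices `{0, 1, …, m}` of a circuit forced by the
`(C2)` constraints between successive occurrences of the same letter of the word of `P`,
together with the circuit condition identifying the vertices `0` and `m`. -/
def C2Rel (m : ℕ) (P : Finset (Finset ℕ)) : ℕ → ℕ → Prop := fun u v =>
  (u = 0 ∧ v = m) ∨
  ∃ i ∈ Finset.Icc 1 m, ∃ j ∈ Finset.Icc 1 m, i < j ∧ partOf P i = partOf P j ∧
    (∀ l ∈ Finset.Icc 1 m, i < l → l < j → partOf P l ≠ partOf P i) ∧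
    ((u = i - 1 ∧ v = j) ∨ (u = i ∧ v = j - 1))

/-- The equivalence of the vertices `{0, 1, …, m}` generated by the `(C2)` identifications:
its classes are the vertex classes of (circuits of) the word of `P`. -/
def vertexEquiv (m : ℕ) (P : Finset (Finset ℕ)) : ℕ → ℕ → Prop :=
  Relation.EqvGen (C2Rel m P)

/-- The label in `{0, 1, …, b}` of the vertex class of a vertex `v`: the class of the
vertex `0` is labelled `0`, and the class of the generating vertex `i_j` of the `j`-th
distinct letter is labelled `j`. -/
noncomputable def labOf (m : ℕ) (P : Finset (Finset ℕ)) (v : ℕ) : ℕ :=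
  if vertexEquiv m P v 0 then 0
  else sInf {j : ℕ | 1 ≤ j ∧ vertexEquiv m P v (iPos m P j)}

/-- The contribution `∫_{[0,1]^{b+1}} ∏_{j=1}^b g_{s_j}(x_{t_j}, x_{l_j}) dx` of a
special symmetric partition `P` of `{1, …, m}` with `b` blocks, where `s_j` is the size of
the `j`-th block of `P` and `(t_j, l_j)` (with `l_j = j`) are the labels of the vertex
classes of the two endpoints of the first occurrence of the `j`-th letter. -/
noncomputable def ssIntegral (g : ℕ → ℝ → ℝ → ℝ) (m b : ℕ) (P : Finset (Finset ℕ)) : ℝ :=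
  ∫ xv : Fin (b + 1) → ℝ in Set.univ.pi fun _ => Set.Icc (0 : ℝ) 1,
    ∏ j ∈ Finset.Icc 1 b,
      g ((partOf P (iPos m P j)).card)
        (xv ((labOf m P (iPos m P j - 1) : ℕ) : Fin (b + 1)))
        (xv ((j : ℕ) : Fin (b + 1)))

/-- A bounded Riemann integrable function on `[0,1]²`: bounded, and (by Lebesgue's
criterion) almost everywhere continuous on the square. -/
def BoundedRiemann (f : ℝ → ℝ → ℝ) : Prop :=
  (∃ C, ∀ a ∈ Set.Icc (0 : ℝ) 1, ∀ b ∈ Set.Icc (0 : ℝ) 1, |f a b| ≤ C) ∧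
  ∀ᵐ p ∂(volume.restrict (Set.Icc (0 : ℝ) 1 ×ˢ Set.Icc (0 : ℝ) 1)),
    ContinuousWithinAt (fun q : ℝ × ℝ => f q.1 q.2) (Set.Icc (0 : ℝ) 1 ×ˢ Set.Icc (0 : ℝ) 1) p

/-- The truncated entry `x_{ij,n} 1_{{|x_{ij,n}| ≤ t_n}}` (with `t_n ∈ [0,∞]`). -/
noncomputable def trunc {Ω : Type*} (x : ℕ → ℕ → ℕ → Ω → ℝ) (t : ℕ → ℝ≥0∞)
    (n i j : ℕ) (ω : Ω) : ℝ :=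
  if ENNReal.ofReal |x n i j ω| ≤ t n then x n i j ω else 0

/-- The `n × n` matrix with `(i,j)` entry `e i j ω` (`1`-indexed). -/
noncomputable def matOf {Ω : Type*} (e : ℕ → ℕ → ℕ → Ω → ℝ) (n : ℕ) (ω : Ω) :
    Matrix (Fin n) (Fin n) ℝ :=
  Matrix.of fun i j : Fin n => e n ((i : ℕ) + 1) ((j : ℕ) + 1) ω

/-- `M_s = ‖g_s‖_∞` on `[0,1]²` for even `s`, and `M_s = 0` for odd `s`. -/
noncomputable def Msup (g : ℕ → ℝ → ℝ → ℝ) (s : ℕ) : ℝ :=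
  if Even s then
    sSup {r : ℝ | ∃ a ∈ Set.Icc (0 : ℝ) 1, ∃ b ∈ Set.Icc (0 : ℝ) 1, r = |g s a b|}
  else 0

/-- `α_{2k} = ∑_{σ ∈ P(2k)} M_σ`, the multiplicative extension of `M` summed over all
partitions of `{1, …, 2k}`. -/
noncomputable def alphaSeq (g : ℕ → ℝ → ℝ → ℝ) (k : ℕ) : ℝ :=
  ∑ P ∈ partitionFinset (2 * k), ∏ B ∈ P, Msup g B.card

/-- Carleman's condition `∑_k β_{2k}^{-1/(2k)} = ∞` for a (moment) sequence `β`. -/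
def CarlemanCond (β : ℕ → ℝ) : Prop :=
  Tendsto (fun N => ∑ k ∈ Finset.Icc 1 N, β (2 * k) ^ (-(1 : ℝ) / (2 * k))) atTop atTop

/-- Assumption A of Bose, Saha, Sen and Sen, "Random matrices with independent entries:
beyond non-crossing partitions". -/
structure AssumptionA {Ω : Type*} [MeasurableSpace Ω] (μpr : Measure Ω)
    (x : ℕ → ℕ → ℕ → Ω → ℝ) (t : ℕ → ℝ≥0∞) (gn : ℕ → ℕ → ℝ → ℝ → ℝ)
    (g : ℕ → ℝ → ℝ → ℝ) : Prop where
  meas : ∀ n i j, Measurable (x n i j)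
  symm : ∀ n i j ω, x n i j ω = x n j i ω
  indep : ∀ n, iIndepFun
    (fun p : {p : ℕ × ℕ // 1 ≤ p.1 ∧ p.1 ≤ p.2 ∧ p.2 ≤ n} => x n p.1.1 p.1.2) μpr
  bddRiemann : ∀ k n : ℕ, 1 ≤ k → BoundedRiemann (gn (2 * k) n)
  momEven : ∀ k n i j : ℕ, 1 ≤ k → 1 ≤ i → i ≤ j → j ≤ n →
    (n : ℝ) * ∫ ω, trunc x t n i j ω ^ (2 * k) ∂μpr = gn (2 * k) n (i / n) (j / n)
  momOdd : ∀ k : ℕ, 1 ≤ k → ∀ α : ℝ, α < 1 →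
    Tendsto (fun n : ℕ => (n : ℝ) ^ α *
      ⨆ p : {p : ℕ × ℕ // 1 ≤ p.1 ∧ p.1 ≤ p.2 ∧ p.2 ≤ n},
        |∫ ω, trunc x t n p.1.1 p.1.2 ω ^ (2 * k - 1) ∂μpr|) atTop (𝓝 0)
  unif : ∀ k : ℕ, 1 ≤ k → TendstoUniformlyOn (fun n p => gn (2 * k) n p.1 p.2)
    (fun p => g (2 * k) p.1 p.2) atTop (Set.Icc 0 1 ×ˢ Set.Icc 0 1)
  carleman : CarlemanCond (alphaSeq g)


/-- Convergence in probability of real random variables to a constant. -/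
def TendstoInProbability {Ω : Type*} [MeasurableSpace Ω] (μpr : Measure Ω)
    (Z : ℕ → Ω → ℝ) (c : ℝ) : Prop :=
  ∀ ε : ℝ, 0 < ε → Tendsto (fun n => μpr {ω | ε ≤ |Z n ω - c|}) atTop (𝓝 0)

/-- The semicircular distribution with variance `c`: density `(2πc)⁻¹ √(4c − x²)`
on `[−2√c, 2√c]`. -/
noncomputable def semicircularMeasure (c : ℝ) : Measure ℝ :=
  volume.withDensity fun s =>
    ENNReal.ofReal ((Set.Icc (-(2 * Real.sqrt c)) (2 * Real.sqrt c)).indicator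
      (fun u => (2 * Real.pi * c)⁻¹ * Real.sqrt (4 * c - u ^ 2)) s)

/-- The squared `L²`-Wasserstein distance between two probability measures on `ℝ`:
the infimum over all couplings of the expected squared difference. -/
noncomputable def d2sq (μ ν : Measure ℝ) : ℝ :=
  sInf {r : ℝ | ∃ ρ : Measure (ℝ × ℝ), IsProbabilityMeasure ρ ∧
    ρ.map Prod.fst = μ ∧ ρ.map Prod.snd = ν ∧
    Integrable (fun q : ℝ × ℝ => (q.1 - q.2) ^ 2) ρ ∧
    r = ∫ q : ℝ × ℝ, (q.1 - q.2) ^ 2 ∂ρ}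

/-- Extension of a vertex function `Fin (m+1) → Fin n` to all of `ℕ` (by reduction
mod `m+1`); positions `0, …, m` are the only ones which are used. -/
def extFin {m n : ℕ} (v : Fin (m + 1) → Fin n) (i : ℕ) : Fin n :=
  v ⟨i % (m + 1), Nat.mod_lt i (Nat.succ_pos m)⟩

/-- The class `Π(ω)` of circuits of length `m` with values in `{1, …, n}` (encoded as
`Fin n`) associated with the word (partition) `P` of `{1, …, m}`: circuits `π` with
`π(0) = π(m)` such that `ω[i] = ω[j] ⟺ {π(i−1), π(i)} = {π(j−1), π(j)}` as unordered
pairs. -/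
noncomputable def circuitsOf (m : ℕ) (P : Finset (Finset ℕ)) (n : ℕ) :
    Finset (Fin (m + 1) → Fin n) :=
  Finset.univ.filter fun v =>
    extFin v m = extFin v 0 ∧
    ∀ i ∈ Finset.Icc 1 m, ∀ j ∈ Finset.Icc 1 m,
      (partOf P i = partOf P j ↔
        ({extFin v (i - 1), extFin v i} : Finset (Fin n)) = {extFin v (j - 1), extFin v j})

/-- The (unordered) edge of the circuit `v` at position `i`. -/
noncomputable def edgeOf {k n : ℕ} (v : Fin (k + 1) → Fin n) (i : ℕ) : Finset (Fin n) :=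
  {extFin v (i - 1), extFin v i}

/-- Quadruples of circuits of length `k` with values in `{1, …, n}` that are jointly
matched and cross matched, with exactly `b` distinct edges in total. -/
noncomputable def quadCircuits (k n b : ℕ) : Finset (Fin 4 → Fin (k + 1) → Fin n) :=
  Finset.univ.filter fun q =>
    (∀ c : Fin 4, extFin (q c) k = extFin (q c) 0) ∧
    (∀ c : Fin 4, ∀ i ∈ Finset.Icc 1 k,
      2 ≤ ∑ c' : Fin 4,
        ((Finset.Icc 1 k).filter fun i' => edgeOf (q c') i' = edgeOf (q c) i).card) ∧
    (∀ c : Fin 4, ∃ i ∈ Finset.Icc 1 k, ∃ c' : Fin 4, c' ≠ c ∧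
      ∃ i' ∈ Finset.Icc 1 k, edgeOf (q c') i' = edgeOf (q c) i) ∧
    ((Finset.univ : Finset (Fin 4)).biUnion
      (fun c => (Finset.Icc 1 k).image fun i => edgeOf (q c) i)).card = b

/-- `P` is a pair-partition: every block has exactly two elements. -/
def IsPairPartition (P : Finset (Finset ℕ)) : Prop := ∀ B ∈ P, B.card = 2

/-- `P` has a crossing: there are `a < b < c < d` with `a, c` in one block and `b, d`
in a different block. -/
def HasCrossing (P : Finset (Finset ℕ)) : Prop :=
  ∃ a b c d : ℕ, a < b ∧ b < c ∧ c < d ∧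
    ∃ B ∈ P, ∃ B' ∈ P, B ≠ B' ∧ a ∈ B ∧ c ∈ B ∧ b ∈ B' ∧ d ∈ B'

/-- `a` is an ancestor of `v` (or equal to it) for the parent function `p`. -/
def ancRel (p : ℕ → ℕ) (a v : ℕ) : Prop := ∃ s : ℕ, p^[s] v = a

/-- `(p, c)` encodes a colored rooted plane tree with vertices `0, 1, …, k` (the root
being `0`) and colors `0, 1, …, b` (the root having color `0`): `p` is the parent
function and `c` the coloring.  The vertices are labelled in depth-first order, left to
right (which encodes the plane structure); every color is used; two vertices of the same
color have parents of the same color, and are at the same distance from the root. -/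
def IsColoredTree (k b : ℕ) (p c : ℕ → ℕ) : Prop :=
  p 0 = 0 ∧ (∀ v, k < v → p v = 0) ∧
  (∀ v, 1 ≤ v → v ≤ k → p v < v) ∧
  (∀ v, 2 ≤ v → v ≤ k → ancRel p (p v) (v - 1)) ∧
  c 0 = 0 ∧ (∀ v, k < v → c v = 0) ∧
  (∀ v, 1 ≤ v → v ≤ k → 1 ≤ c v ∧ c v ≤ b) ∧
  (∀ j, 1 ≤ j → j ≤ b → ∃ v, 1 ≤ v ∧ v ≤ k ∧ c v = j) ∧
  (∀ u v, 1 ≤ u → u ≤ k → 1 ≤ v → v ≤ k → c u = c v → c (p u) = c (p v)) ∧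
  (∀ u v, 1 ≤ u → u ≤ k → 1 ≤ v → v ≤ k → c u = c v →
    ∀ s : ℕ, (p^[s] u = 0 ↔ p^[s] v = 0))

/-- The number `|E(i,j)|` of edges of the colored tree `(p, c)` whose endpoints have
colors `i` and `j`. -/
noncomputable def edgeColorCount (k : ℕ) (p c : ℕ → ℕ) (i j : ℕ) : ℕ :=
  ((Finset.Icc 1 k).filter fun v => (c v = j ∧ c (p v) = i) ∨ (c v = i ∧ c (p v) = j)).card

/-- The generalized homomorphism density
`t(T′, {M_{2k,n}}) = ∫_{[0,1]^{b+1}} ∏_{(i,j) : E(i,j) ≠ ∅} g_{2|E(i,j)|}(x_i, x_j) dx`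
of the colored rooted tree `(p, c)` with `k+1` vertices and `b+1` colors. -/
noncomputable def homDensity (g : ℕ → ℝ → ℝ → ℝ) (k b : ℕ) (p c : ℕ → ℕ) : ℝ :=
  ∫ xv : Fin (b + 1) → ℝ in Set.univ.pi fun _ => Set.Icc (0 : ℝ) 1,
    ∏ i ∈ Finset.range (b + 1), ∏ j ∈ Finset.range (b + 1),
      if i < j ∧ 0 < edgeColorCount k p c i j then
        g (2 * edgeColorCount k p c i j) (xv ((i : ℕ) : Fin (b + 1))) (xv ((j : ℕ) : Fin (b + 1)))
      else 1

/-- `(1/n) ∑_{i,j} x_{ij,n}² 1_{{|x_{ij,n}| > t_n}}`, the contribution of the truncated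
tails. -/
noncomputable def truncTail {Ω : Type*} (x : ℕ → ℕ → ℕ → Ω → ℝ) (t : ℕ → ℝ≥0∞)
    (n : ℕ) (ω : Ω) : ℝ :=
  (1 / n : ℝ) * ∑ i ∈ Finset.Icc 1 n, ∑ j ∈ Finset.Icc 1 n,
    if t n < ENNReal.ofReal |x n i j ω| then x n i j ω ^ 2 else 0

/-- `{0, C_2, 0, C_4, 0, …}` is the cumulant sequence of a probability distribution `G`
whose moment sequence satisfies Carleman's condition (via the moment–cumulant formula
`β_m = ∑_{σ ∈ P(m)} κ_σ`). -/
def IsCumulantSeqWithCarleman (C : ℕ → ℝ) : Prop :=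
  ∃ (G : Measure ℝ) (β : ℕ → ℝ), IsProbabilityMeasure G ∧
    (∀ m : ℕ, 1 ≤ m → Integrable (fun s : ℝ => s ^ m) G ∧ ∫ s, s ^ m ∂G = β m) ∧
    (∀ m : ℕ, 1 ≤ m →
      β m = ∑ P ∈ partitionFinset m, ∏ B ∈ P, (if Even B.card then C B.card else 0)) ∧
    CarlemanCond β

end

lemma card_small_image {N n b : ℕ} (hN : 1 ≤ N) :
    ((Finset.univ : Finset (Fin N → Fin n)).filter
      (fun v => (Finset.image v Finset.univ).card ≤ b)).card ≤ b ^ N * n ^ b := by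
  classical
  set T : Finset ((Fin N → ℕ) × (Fin b → Fin n)) :=
    (Fintype.piFinset fun _ : Fin N => Finset.range b) ×ˢ Finset.univ with hT
  have hTcard : T.card = b ^ N * n ^ b := by
    rw [hT, Finset.card_product, Fintype.card_piFinset]
    simp [Finset.card_range, Fintype.card_fun]
  rw [← hTcard]
  set s : (Fin N → Fin n) → List (Fin n) := fun v => (Finset.image v Finset.univ).sort (· ≤ ·)
    with hs
  have hmem : ∀ (v : Fin N → Fin n) (k : Fin N), List.idxOf (v k) (s v) < (s v).length := by
    intro v k
    rw [List.idxOf_lt_length_iff, hs, Finset.mem_sort]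
    exact Finset.mem_image_of_mem v (Finset.mem_univ k)
  set enc : (Fin N → Fin n) → (Fin N → ℕ) × (Fin b → Fin n) :=
    fun v => (fun k => List.idxOf (v k) (s v),
              fun t => (s v).getD t (v ⟨0, hN⟩)) with henc
  apply Finset.card_le_card_of_injOn enc
  · intro v hv
    simp only [Finset.mem_coe, Finset.mem_filter] at hv
    have hlen : (s v).length ≤ b := by
      rw [hs]; simpa [Finset.length_sort] using hv.2
    simp only [hT, Finset.mem_coe, Finset.mem_product, Fintype.mem_piFinset, Finset.mem_range, Finset.mem_univ,
      and_true, henc]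
    intro k
    exact lt_of_lt_of_le (hmem v k) hlen
  · intro v hv w hw hvw
    simp only [Finset.mem_coe, Finset.mem_filter] at hv hw
    have hlenv : (s v).length ≤ b := by rw [hs]; simpa [Finset.length_sort] using hv.2
    have hrec : ∀ (u : Fin N → Fin n) (hu : (s u).length ≤ b), ∀ k,
        u k = (enc u).2 ⟨List.idxOf (u k) (s u), lt_of_lt_of_le (hmem u k) hu⟩ := by
      intro u hu k
      simp only [henc]
      rw [List.getD_eq_getElem _ _ (hmem u k), List.getElem_idxOf]
    funext k
    have h1 := hrec v hlenv k
    have hlenw : (s w).length ≤ b := by rw [hs]; simpa [Finset.length_sort] using hw.2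
    have h2 := hrec w hlenw k
    have hidx : List.idxOf (v k) (s v) = List.idxOf (w k) (s w) := by
      have := congrArg Prod.fst hvw
      exact congrFun this k
    rw [h1, h2, hvw]
    exact congrArg ((enc w).2) (Fin.ext hidx)


lemma partOf_eq_of_mem {M : ℕ} {P : Finset (Finset ℕ)} (hP : IsPartitionOf M P)
    {k : ℕ} {B : Finset ℕ} (hB : B ∈ P) (hkB : k ∈ B) : partOf P k = B := by
  classical
  have hfil : P.filter (fun B' => k ∈ B') = {B} := by
    ext B'
    simp only [mem_filter, mem_singleton]
    constructor
    · rintro ⟨hB', hk'⟩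
      by_contra hne
      exact absurd hkB (Finset.disjoint_left.mp (hP.2.2.1 B' hB' B hB hne) hk')
    · rintro rfl; exact ⟨hB, hkB⟩
  rw [partOf, hfil, Finset.sup_singleton, id]

lemma partOf_mem {M : ℕ} {P : Finset (Finset ℕ)} (hP : IsPartitionOf M P)
    {k : ℕ} (hk : k ∈ Finset.Icc 1 M) : k ∈ partOf P k ∧ partOf P k ∈ P := by
  obtain ⟨B, hB, hkB⟩ := hP.2.2.2 k hk
  rw [partOf_eq_of_mem hP hB hkB]; exact ⟨hkB, hB⟩

lemma walk_contra {n : ℕ} (E : Finset (Finset (Fin n))) (h : Fin n → ℕ) (w : ℕ → Fin n)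
    (N2 : ∀ e ∈ E, ∀ a ∈ e, w (h a) = a)
    (N3 : ∀ e ∈ E, ∀ x z : Fin n, e = {x, z} → h x < h z → e = {w (h z - 1), w (h z)})
    (Ncard : ∀ e ∈ E, e.card = 2)
    (L : ℕ) (hL : 1 ≤ L) (c : ℕ → Fin n) (hcL : c L = c 0)
    (g : ℕ → Finset (Fin n)) (hgE : ∀ t, 1 ≤ t → t ≤ L → g t ∈ E)
    (hge : ∀ t, 1 ≤ t → t ≤ L → g t = {c (t - 1), c t})
    (hginj : ∀ t, 1 ≤ t → t ≤ L → ∀ t', 1 ≤ t' → t' ≤ L → g t = g t' → t = t') : False := by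
  classical
  have nonloop : ∀ t, 1 ≤ t → t ≤ L → c (t - 1) ≠ c t := by
    intro t h1 h2 heq
    have hc2 : (g t).card = 2 := Ncard _ (hgE t h1 h2)
    rw [hge t h1 h2, heq] at hc2
    simp at hc2
  have hL2 : 2 ≤ L := by
    rcases Nat.lt_or_ge L 2 with hlt | hge2
    · interval_cases L
      · exact absurd hcL.symm (by simpa using nonloop 1 le_rfl le_rfl)
    · exact hge2
  obtain ⟨t0, ht0mem, ht0max⟩ := Finset.exists_max_image (Finset.Icc 0 (L - 1))
    (fun t => h (c t)) ⟨0, by simp⟩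
  simp only [Finset.mem_Icc] at ht0mem
  set p0 : ℕ := if t0 = 0 then L else t0 with hp0
  have hp01 : 1 ≤ p0 := by
    rw [hp0]; split
    · exact hL
    · omega
  have hp0L : p0 ≤ L := by
    rw [hp0]; split
    · exact le_rfl
    · omega
  have hcp0 : c p0 = c t0 := by
    rw [hp0]; split
    · rename_i h0; rw [h0, hcL]
    · rfl
  have hmaxmem : ∀ t, t ≤ L - 1 → h (c t) ≤ h (c t0) := fun t ht =>
    ht0max t (Finset.mem_Icc.mpr ⟨Nat.zero_le _, ht⟩)
  have key : ∀ e ∈ E, ∀ a : Fin n, e = {a, c t0} → h a ≤ h (c t0) → a ≠ c t0 →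
      e = {w (h (c t0) - 1), w (h (c t0))} := by
    intro e heE a hea hha hne
    have hwa : w (h a) = a := N2 e heE a (by rw [hea]; simp)
    have hwu : w (h (c t0)) = c t0 := N2 e heE (c t0) (by rw [hea]; simp)
    have : h a ≠ h (c t0) := by
      intro hh; rw [← hwa, hh, hwu] at hne; exact hne rfl
    exact N3 e heE a (c t0) hea (lt_of_le_of_ne hha this)
  have hgl := hge p0 hp01 hp0L
  have hglE := hgE p0 hp01 hp0L
  have hlnl : c (p0 - 1) ≠ c p0 := nonloop p0 hp01 hp0L
  have hlmax : h (c (p0 - 1)) ≤ h (c t0) := hmaxmem _ (by omega)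
  have heleft : g p0 = {w (h (c t0) - 1), w (h (c t0))} := by
    apply key _ hglE (c (p0 - 1)) (by rw [hgl, hcp0]) hlmax
    rw [← hcp0]; exact hlnl
  have ht1 : 1 ≤ t0 + 1 := by omega
  have ht1L : t0 + 1 ≤ L := by omega
  have hgr := hge (t0 + 1) ht1 ht1L
  have hgrE := hgE (t0 + 1) ht1 ht1L
  have hrnl : c t0 ≠ c (t0 + 1) := by
    have := nonloop (t0 + 1) ht1 ht1L
    simpa using this
  have hrmax : h (c (t0 + 1)) ≤ h (c t0) := by
    rcases Nat.lt_or_ge (t0 + 1) L with hlt | hgeL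
    · exact hmaxmem _ (by omega)
    · have : t0 + 1 = L := le_antisymm ht1L hgeL
      rw [this, hcL]
      exact hmaxmem 0 (by omega)
  have heright : g (t0 + 1) = {w (h (c t0) - 1), w (h (c t0))} := by
    apply key _ hgrE (c (t0 + 1)) _ hrmax (Ne.symm hrnl)
    rw [hgr]
    simp only [Nat.add_sub_cancel]
    exact Finset.pair_comm _ _
  have : p0 = t0 + 1 := hginj p0 hp01 hp0L (t0 + 1) ht1 ht1L (heleft.trans heright.symm)
  rw [hp0] at this
  split at this <;> omega


noncomputable def wedge {n : ℕ} (w : ℕ → Fin n) (k : ℕ) : Finset (Fin n) :=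
  {w (k - 1), w k}

lemma vertex_bound {M b : ℕ} {P : Finset (Finset ℕ)} (hP : IsPartitionOf M P)
    (hb : P.card = b) {B : Finset ℕ} (hB : B ∈ P) {i j : ℕ} (hi : i ∈ B) (hj : j ∈ B)
    (hij : i < j) (hsucc : ∀ l ∈ B, ¬(i < l ∧ l < j)) (hm : i + 1 < j)
    (hcon : ∀ l l', i < l → l < l' → l' < j → partOf P l ≠ partOf P l')
    {n : ℕ} (w : ℕ → Fin n)
    (hiff : ∀ a ∈ Finset.Icc 1 M, ∀ c ∈ Finset.Icc 1 M,
      (partOf P a = partOf P c ↔ wedge w a = wedge w c)) :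
    ((Finset.range (M + 1)).image w).card ≤ b := by
  classical
  have wedge_eq : ∀ k, wedge w k = ({w (k - 1), w k} : Finset (Fin n)) := fun _ => rfl
  -- position facts
  have hiM : i ∈ Finset.Icc 1 M := hP.2.1 B hB hi
  have hjM : j ∈ Finset.Icc 1 M := hP.2.1 B hB hj
  have hi1 : 1 ≤ i := (Finset.mem_Icc.mp hiM).1
  have hjMle : j ≤ M := (Finset.mem_Icc.mp hjM).2
  have hpi : partOf P i = B := partOf_eq_of_mem hP hB hi
  have hpj : partOf P j = B := partOf_eq_of_mem hP hB hj
  have hmidM : ∀ l, i < l → l ≤ j → l ∈ Finset.Icc 1 M := by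
    intro l h1 h2; exact Finset.mem_Icc.mpr ⟨by omega, by omega⟩
  have hmid : ∀ l, i < l → l < j → partOf P l ≠ B := by
    intro l h1 h2 hlB
    have hlM := hmidM l h1 (le_of_lt h2)
    have := (partOf_mem hP hlM).1
    rw [hlB] at this
    exact hsucc l this ⟨h1, h2⟩
  have hpdist : ∀ l l', i < l → l ≤ j → i < l' → l' ≤ j → l ≠ l' →
      partOf P l ≠ partOf P l' := by
    have base : ∀ l l', i < l → l < l' → l' ≤ j → partOf P l ≠ partOf P l' := by
      intro l l' h1 h2 h3
      rcases eq_or_lt_of_le h3 with rfl | h3'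
      · rw [hpj]; exact hmid l h1 h2
      · exact hcon l l' h1 h2 h3'
    intro l l' h1 h2 h1' h2' hne
    rcases lt_trichotomy l l' with h | h | h
    · exact base l l' h1 h h2'
    · exact absurd h hne
    · exact (base l' l h1' h h2).symm
  -- edge set
  have hEcard : ((Finset.Icc 1 M).image (wedge w)).card ≤ b := by
    set f : Finset ℕ → Finset (Fin n) := fun Bl =>
      if h : ∃ k, k ∈ Finset.Icc 1 M ∧ partOf P k = Bl then wedge w h.choose else ∅ with hfdef
    have hsub : (Finset.Icc 1 M).image (wedge w) ⊆
        ((Finset.Icc 1 M).image (partOf P)).image f := by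
      intro e he
      obtain ⟨k, hk, rfl⟩ := Finset.mem_image.mp he
      refine Finset.mem_image.mpr ⟨partOf P k, Finset.mem_image_of_mem _ hk, ?_⟩
      have hex : ∃ k', k' ∈ Finset.Icc 1 M ∧ partOf P k' = partOf P k := ⟨k, hk, rfl⟩
      show (if h : ∃ k', k' ∈ Finset.Icc 1 M ∧ partOf P k' = partOf P k
        then wedge w h.choose else ∅) = wedge w k
      rw [dif_pos hex]
      exact (hiff _ hex.choose_spec.1 _ hk).mp hex.choose_spec.2
    calc ((Finset.Icc 1 M).image (wedge w)).card
        ≤ (((Finset.Icc 1 M).image (partOf P)).image f).card := Finset.card_le_card hsub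
      _ ≤ ((Finset.Icc 1 M).image (partOf P)).card := Finset.card_image_le
      _ ≤ P.card := Finset.card_le_card (by
          intro Bl hBl
          obtain ⟨k, hk, rfl⟩ := Finset.mem_image.mp hBl
          exact (partOf_mem hP hk).2)
      _ = b := hb
  set E : Finset (Finset (Fin n)) := (Finset.Icc 1 M).image (wedge w) with hEdef
  -- suppose too many vertices
  by_contra hVb
  push_neg at hVb
  have hVcard : b + 1 ≤ ((Finset.range (M + 1)).image w).card := hVb
  set V : Finset (Fin n) := (Finset.range (M + 1)).image w with hVdef
  -- first hit times
  have hwh : ∀ s : ℕ, w (sInf {t : ℕ | w t = w s}) = w s := by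
    intro s
    have : sInf {t : ℕ | w t = w s} ∈ {t : ℕ | w t = w s} := Nat.sInf_mem ⟨s, rfl⟩
    exact this
  set hfun : Fin n → ℕ := fun u => sInf {t : ℕ | w t = u} with hhdef
  have hwh' : ∀ s : ℕ, w (hfun (w s)) = w s := hwh
  have hle : ∀ s : ℕ, hfun (w s) ≤ s := fun s =>
    Nat.sInf_le (show s ∈ {t : ℕ | w t = w s} from rfl)
  have hVmem : ∀ u ∈ V, w (hfun u) = u ∧ hfun u ≤ M := by
    intro u hu
    obtain ⟨t, ht, rfl⟩ := Finset.mem_image.mp hu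
    have htM : t ≤ M := by have := Finset.mem_range.mp ht; omega
    exact ⟨hwh' t, le_trans (hle t) htM⟩
  have hErmem : ∀ u ∈ V.erase (w 0), 1 ≤ hfun u ∧ hfun u ≤ M ∧ w (hfun u) = u := by
    intro u hu
    obtain ⟨hne, huV⟩ := Finset.mem_erase.mp hu
    obtain ⟨h1, h2⟩ := hVmem u huV
    refine ⟨?_, h2, h1⟩
    rcases Nat.eq_zero_or_pos (hfun u) with h0 | h0
    · rw [h0] at h1; exact absurd h1.symm hne
    · exact h0
  have hFmaps : ∀ u ∈ V.erase (w 0), wedge w (hfun u) ∈ E := by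
    intro u hu
    obtain ⟨h1, h2, -⟩ := hErmem u hu
    exact Finset.mem_image_of_mem _ (Finset.mem_Icc.mpr ⟨h1, h2⟩)
  have hFinj : Set.InjOn (fun u => wedge w (hfun u)) (V.erase (w 0)) := by
    have key2 : ∀ u u', u ∈ V.erase (w 0) → u' ∈ V.erase (w 0) →
        wedge w (hfun u) = wedge w (hfun u') → hfun u < hfun u' → False := by
      intro u u' hu hu' hF hlt
      obtain ⟨hu1, -, hu3⟩ := hErmem u hu
      obtain ⟨-, -, hu3'⟩ := hErmem u' hu'
      have hmem' : u' ∈ ({w (hfun u - 1), w (hfun u)} : Finset (Fin n)) := by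
        have h1 : u' ∈ wedge w (hfun u') := by rw [wedge_eq]; simp [hu3']
        rw [← hF] at h1
        rw [wedge_eq] at h1
        exact h1
      rcases Finset.mem_insert.mp hmem' with h | h
      · have := hle (hfun u - 1)
        rw [← h] at this
        omega
      · rw [Finset.mem_singleton] at h
        have := hle (hfun u)
        rw [← h] at this
        omega
    intro u hu u' hu' hF
    dsimp only at hF
    by_contra hne
    obtain ⟨-, -, hu3⟩ := hErmem u hu
    obtain ⟨-, -, hu3'⟩ := hErmem u' hu'
    rcases lt_trichotomy (hfun u) (hfun u') with h | h | h
    · exact key2 u u' hu hu' hF h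
    · rw [← hu3, ← hu3', h] at hne; exact hne rfl
    · exact key2 u' u hu' hu hF.symm h
  have hw0V : w 0 ∈ V := Finset.mem_image_of_mem _ (by simp)
  have hercard : b ≤ (V.erase (w 0)).card := by
    rw [Finset.card_erase_of_mem hw0V]
    omega
  have hcard2 : (V.erase (w 0)).card ≤ E.card :=
    Finset.card_le_card_of_injOn _ hFmaps hFinj
  have himgE : Finset.image (fun u => wedge w (hfun u)) (V.erase (w 0)) = E := by
    apply Finset.eq_of_subset_of_card_le
    · intro e he
      obtain ⟨u, hu, rfl⟩ := Finset.mem_image.mp he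
      exact hFmaps u hu
    · rw [Finset.card_image_of_injOn hFinj]
      omega
  have PE : ∀ e ∈ E, ∃ u, u ∈ V.erase (w 0) ∧ wedge w (hfun u) = e := by
    intro e he
    rw [← himgE] at he
    obtain ⟨u, hu, hFu⟩ := Finset.mem_image.mp he
    exact ⟨u, hu, hFu⟩
  -- the three edge facts
  have N2 : ∀ e ∈ E, ∀ a ∈ e, w (hfun a) = a := by
    intro e he a ha
    obtain ⟨u, hu, rfl⟩ := PE e he
    rw [wedge_eq] at ha
    rcases Finset.mem_insert.mp ha with h | h
    · rw [h]; exact hwh' _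
    · rw [Finset.mem_singleton] at h; rw [h]; exact hwh' _
  have Nloop : ∀ u, u ∈ V.erase (w 0) → w (hfun u - 1) ≠ w (hfun u) := by
    intro u hu heq
    obtain ⟨h1, -, h3⟩ := hErmem u hu
    have := hle (hfun u - 1)
    rw [heq, h3] at this
    omega
  have Ncard : ∀ e ∈ E, e.card = 2 := by
    intro e he
    obtain ⟨u, hu, rfl⟩ := PE e he
    rw [wedge_eq]
    exact Finset.card_pair (Nloop u hu)
  have N3 : ∀ e ∈ E, ∀ x z : Fin n, e = {x, z} → hfun x < hfun z →
      e = {w (hfun z - 1), w (hfun z)} := by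
    intro e he x z hexz hlt
    obtain ⟨u, hu, rfl⟩ := PE e he
    obtain ⟨hu1, -, hu3⟩ := hErmem u hu
    rw [wedge_eq] at hexz
    have hz : z ∈ ({w (hfun u - 1), w (hfun u)} : Finset (Fin n)) := by
      rw [hexz]; simp
    have hx : x ∈ ({w (hfun u - 1), w (hfun u)} : Finset (Fin n)) := by
      rw [hexz]; simp
    rcases Finset.mem_insert.mp hz with hz1 | hz1
    · exfalso
      have hzle : hfun z ≤ hfun u - 1 := by
        have := hle (hfun u - 1); rw [← hz1] at this; exact this
      rcases Finset.mem_insert.mp hx with hx1 | hx1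
      · rw [hx1, ← hz1] at hlt; exact lt_irrefl _ hlt
      · rw [Finset.mem_singleton] at hx1
        have hxu : hfun x = hfun u := by rw [hx1, hu3]
        omega
    · rw [Finset.mem_singleton] at hz1
      have : hfun z = hfun u := by rw [hz1, hu3]
      rw [wedge_eq, this]
  -- the closed walk
  have hij' : wedge w i = wedge w j := (hiff i hiM j hjM).mp (hpi.trans hpj.symm)
  have heiE : wedge w i ∈ E := Finset.mem_image_of_mem _ hiM
  have hci : w (i - 1) ≠ w i := by
    have h2 : (wedge w i).card = 2 := Ncard _ heiE
    rw [wedge_eq] at h2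
    intro heq; rw [heq] at h2; simp at h2
  have hcj : w (j - 1) ≠ w j := by
    have h2 : (wedge w j).card = 2 := by rw [← hij']; exact Ncard _ heiE
    rw [wedge_eq] at h2
    intro heq; rw [heq] at h2; simp at h2
  have hjm1mem : w (j - 1) ∈ ({w (i - 1), w i} : Finset (Fin n)) := by
    have h1 : w (j - 1) ∈ wedge w j := by rw [wedge_eq]; simp
    rw [← hij', wedge_eq] at h1
    exact h1
  have hjmem : w j ∈ ({w (i - 1), w i} : Finset (Fin n)) := by
    have h1 : w j ∈ wedge w j := by rw [wedge_eq]; simp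
    rw [← hij', wedge_eq] at h1
    exact h1
  -- main unified walk argument
  have main : ∀ L : ℕ, 1 ≤ L → i + L ≤ j → w (i + L) = w i → False := by
    intro L hL1 hLj hclose
    apply walk_contra E hfun w N2 N3 Ncard L hL1 (fun t => w (i + t))
      (by simpa using hclose) (fun t => wedge w (i + t))
    · intro t ht1 htL
      exact Finset.mem_image_of_mem _ (Finset.mem_Icc.mpr ⟨by omega, by omega⟩)
    · intro t ht1 htL
      rw [wedge_eq]
      have h1 : i + t - 1 = i + (t - 1) := by omega
      rw [h1]
    · intro t ht1 htL t' ht1' htL' heq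
      by_contra hne
      have hne' : i + t ≠ i + t' := by omega
      have := hpdist (i + t) (i + t') (by omega) (by omega) (by omega) (by omega) hne'
      exact this ((hiff (i + t) (hmidM _ (by omega) (by omega))
        (i + t') (hmidM _ (by omega) (by omega))).mpr heq)
  rcases Finset.mem_insert.mp hjm1mem with hA | hA
  · -- w (j-1) = w (i-1) : case B, need w j = w i
    have hwj : w j = w i := by
      rcases Finset.mem_insert.mp hjmem with h | h
      · exfalso; rw [← hA] at h; exact hcj h.symm
      · exact Finset.mem_singleton.mp h
    apply main (j - i) (by omega) (by omega)
    have hji : i + (j - i) = j := by omega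
    rw [hji, hwj]
  · -- w (j-1) = w i : case A
    rw [Finset.mem_singleton] at hA
    apply main (j - 1 - i) (by omega) (by omega)
    have hji : i + (j - 1 - i) = j - 1 := by omega
    rw [hji, hA]

lemma circuit_image_card_le {M b : ℕ} {P : Finset (Finset ℕ)} (hP : IsPartitionOf M P)
    (hb : P.card = b) {B : Finset ℕ} (hB : B ∈ P) {i j : ℕ} (hi : i ∈ B) (hj : j ∈ B)
    (hij : i < j) (hsucc : ∀ l ∈ B, ¬(i < l ∧ l < j)) (hm : i + 1 < j)
    (hcon : ∀ l l', i < l → l < l' → l' < j → partOf P l ≠ partOf P l')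
    {n : ℕ} {v : Fin (M + 1) → Fin n} (hv : v ∈ circuitsOf M P n) :
    (Finset.image v Finset.univ).card ≤ b := by
  classical
  simp only [circuitsOf, Finset.mem_filter] at hv
  have hiff : ∀ a ∈ Finset.Icc 1 M, ∀ c ∈ Finset.Icc 1 M,
      (partOf P a = partOf P c ↔
        wedge (fun k => extFin v k) a = wedge (fun k => extFin v k) c) := by
    intro a ha c hc
    exact hv.2.2 a ha c hc
  have hbound := vertex_bound hP hb hB hi hj hij hsucc hm hcon (fun k => extFin v k) hiff
  refine le_trans (Finset.card_le_card ?_) hbound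
  intro u hu
  obtain ⟨x, -, rfl⟩ := Finset.mem_image.mp hu
  refine Finset.mem_image.mpr ⟨x.val, Finset.mem_range.mpr x.isLt, ?_⟩
  simp [extFin, Nat.mod_eq_of_lt x.isLt]


/-- **Lemma.** If the word `ω` (of length `M`, with `b` distinct letters) satisfies
`|Π(ω)|/n^{b+1} → 1` and the positions strictly between two successive occurrences of a
letter `y` are nonempty, then the letters occupying them cannot all be distinct. -/
theorem letters_between_successive_occurrences_not_all_distinct
    (M b : ℕ) (P : Finset (Finset ℕ)) (hP : IsPartitionOf M P) (hb : P.card = b)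
    (hlim : Tendsto (fun n : ℕ => ((circuitsOf M P n).card : ℝ) / (n : ℝ) ^ (b + 1))
      atTop (𝓝 1))
    (B : Finset ℕ) (hB : B ∈ P) (i j : ℕ) (hi : i ∈ B) (hj : j ∈ B) (hij : i < j)
    (hsucc : ∀ l ∈ B, ¬(i < l ∧ l < j)) (hm : i + 1 < j) :
    ∃ l l', i < l ∧ l < l' ∧ l' < j ∧ partOf P l = partOf P l' := by
  classical
  by_contra hcon0
  push_neg at hcon0
  have hcon' : ∀ l l', i < l → l < l' → l' < j → partOf P l ≠ partOf P l' := by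
    intro l l' h1 h2 h3
    exact hcon0 l l' h1 h2 h3
  have hbound : ∀ n : ℕ, ((circuitsOf M P n).card : ℝ) ≤ (b : ℝ) ^ (M + 1) * (n : ℝ) ^ b := by
    intro n
    have h1 : (circuitsOf M P n).card ≤ b ^ (M + 1) * n ^ b := by
      refine le_trans (Finset.card_le_card ?_) (card_small_image (Nat.succ_pos M))
      intro v hv
      simp only [Finset.mem_filter, Finset.mem_univ, true_and]
      exact circuit_image_card_le hP hb hB hi hj hij hsucc hm hcon' hv
    calc ((circuitsOf M P n).card : ℝ) ≤ ((b ^ (M + 1) * n ^ b : ℕ) : ℝ) := by exact_mod_cast h1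
      _ = (b : ℝ) ^ (M + 1) * (n : ℝ) ^ b := by push_cast; ring
  have h0 : Tendsto (fun n : ℕ => ((circuitsOf M P n).card : ℝ) / (n : ℝ) ^ (b + 1))
      atTop (𝓝 0) := by
    refine squeeze_zero' (Eventually.of_forall fun n =>
        div_nonneg (by positivity) (by positivity)) ?_
      (tendsto_const_div_atTop_nhds_zero_nat ((b : ℝ) ^ (M + 1)))
    filter_upwards [eventually_ge_atTop 1] with n hn
    have hnpos : (0 : ℝ) < (n : ℝ) := by exact_mod_cast hn
    rw [div_le_div_iff₀ (by positivity) hnpos]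
    calc ((circuitsOf M P n).card : ℝ) * n ≤ ((b : ℝ) ^ (M + 1) * (n : ℝ) ^ b) * n :=
          mul_le_mul_of_nonneg_right (hbound n) (le_of_lt hnpos)
      _ = (b : ℝ) ^ (M + 1) * (n : ℝ) ^ (b + 1) := by ring
  exact one_ne_zero (tendsto_nhds_unique hlim h0)
end

section
/- Fix k ≥ 1 and 1 ≤ b ≤ 2k. Let Q_{k,4}^b denote the number of quadruples (π_1, π_2, π_3, π_4) of circuits of length k into {1,…,n} that are jointly matched and cross matched and have exactly b distinct edges across the four circuits. Then there exists a constant C (independent of n) such that Q_{k,4}^b ≤ C·n^{b+2} for all n. -/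
open MeasureTheory ProbabilityTheory Filter Finset
open scoped BigOperators ENNReal NNReal Topology Classical

set_option linter.unusedSectionVars false
section Graph
variable {V : Type*} [DecidableEq V]

def estep (E : Finset (Finset V)) (a b : V) : Prop := ∃ e ∈ E, a ∈ e ∧ b ∈ e

lemma estep_symm (E : Finset (Finset V)) : Symmetric (estep E) := by
  rintro a b ⟨e, he, ha, hb⟩; exact ⟨e, he, hb, ha⟩

lemma reach_symm (E : Finset (Finset V)) {a b : V}
    (h : Relation.ReflTransGen (estep E) a b) : Relation.ReflTransGen (estep E) b a :=
  by
  induction h with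
  | refl => exact Relation.ReflTransGen.refl
  | tail _ hs ih => exact Relation.ReflTransGen.head (estep_symm E hs) ih

lemma reach_erase (E : Finset (Finset V)) (e : Finset V) (R : Finset V)
    {r v : V} (hr : r ∈ R ∪ e) (h : Relation.ReflTransGen (estep E) r v) :
    ∃ r' ∈ R ∪ e, Relation.ReflTransGen (estep (E.erase e)) r' v := by
  induction h with
  | refl => exact ⟨r, hr, Relation.ReflTransGen.refl⟩
  | @tail u v hru hstep ih =>
    obtain ⟨e0, he0, hu, hv⟩ := hstep
    by_cases hee : e0 = e
    · exact ⟨v, Finset.mem_union_right _ (hee ▸ hv), Relation.ReflTransGen.refl⟩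
    · obtain ⟨r', hr', hp⟩ := ih
      exact ⟨r', hr', hp.tail ⟨e0, Finset.mem_erase.2 ⟨hee, he0⟩, hu, hv⟩⟩

lemma card_sup_le_aux : ∀ (N : ℕ) (E : Finset (Finset V)), E.card = N →
    (∀ e ∈ E, e.card ≤ 2) →
    ∀ R : Finset V, (∀ v ∈ E.sup id, ∃ r ∈ R, Relation.ReflTransGen (estep E) r v) →
    (E.sup id ∪ R).card ≤ E.card + R.card := by
  intro N
  induction N with
  | zero =>
    intro E hE _ R _
    rw [Finset.card_eq_zero] at hE
    subst hE
    simpa using Finset.card_le_card (Finset.union_subset (by simp) (subset_refl R))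
  | succ N ih =>
    intro E hE hcard R hreach
    by_cases hmeet : ∃ e ∈ E, ∃ x, x ∈ e ∧ x ∈ R
    · obtain ⟨e, he, x, hxe, hxR⟩ := hmeet
      set E' := E.erase e with hE'
      have hEeq : E = insert e E' := by
        simp [hE', Finset.insert_erase he]
      have hsup : E.sup id = e ∪ E'.sup id := by
        rw [hEeq, Finset.sup_insert]; rfl
      have hreach' : ∀ v ∈ E'.sup id, ∃ r ∈ R ∪ e,
          Relation.ReflTransGen (estep E') r v := by
        intro v hv
        have hv2 : v ∈ E.sup id := by rw [hsup]; exact Finset.mem_union_right _ hv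
        obtain ⟨r, hrR, hp⟩ := hreach v hv2
        exact reach_erase E e R (Finset.mem_union_left _ hrR) hp
      have hcard' : ∀ e' ∈ E', e'.card ≤ 2 := fun e' h' =>
        hcard e' (Finset.mem_of_mem_erase h')
      have hE'card : E'.card = N := by
        rw [hE', Finset.card_erase_of_mem he, hE]; omega
      have main := ih E' hE'card hcard' (R ∪ e) hreach'
      have hsub : E.sup id ∪ R ⊆ E'.sup id ∪ (R ∪ e) := by
        rw [hsup]
        intro y hy
        rcases Finset.mem_union.1 hy with hy | hy
        · rcases Finset.mem_union.1 hy with hy | hy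
          · exact Finset.mem_union_right _ (Finset.mem_union_right _ hy)
          · exact Finset.mem_union_left _ hy
        · exact Finset.mem_union_right _ (Finset.mem_union_left _ hy)
      have hRe : (R ∪ e).card ≤ R.card + 1 := by
        have h1 : (R ∪ e).card ≤ R.card + (e \ R).card := by
          rw [Finset.union_comm, ← Finset.card_sdiff_add_card e R]; omega
        have h2 : e \ R ⊆ e.erase x := by
          intro y hy
          rcases Finset.mem_sdiff.1 hy with ⟨hye, hyR⟩
          exact Finset.mem_erase.2 ⟨fun h => hyR (h ▸ hxR), hye⟩
        have h3 : (e.erase x).card ≤ 1 := by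
          have := Finset.card_erase_of_mem hxe
          have := hcard e he
          omega
        have := Finset.card_le_card h2
        omega
      have := Finset.card_le_card hsub
      have hEpos : 1 ≤ E.card := Finset.card_pos.2 ⟨e, he⟩
      rw [hE'card] at main
      omega
    · -- no edge meets R : E.sup id ⊆ R
      push_neg at hmeet
      have : E.sup id ⊆ R := by
        intro v hv
        obtain ⟨r, hrR, hp⟩ := hreach v hv
        rcases hp.cases_head with heq | ⟨c, ⟨e0, he0, hre, _⟩, _⟩
        · exact heq ▸ hrR
        · exact absurd hrR (hmeet e0 he0 r hre)
      have := Finset.card_le_card (Finset.union_subset this (subset_refl R))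
      omega

end Graph

lemma count_bound (k n s : ℕ) (hs : s ≤ n) (Q : Finset (Fin 4 → Fin (k+1) → Fin n))
    (hQ : ∀ q ∈ Q, (Finset.univ.biUnion fun c : Fin 4 => Finset.univ.image (q c)).card ≤ s) :
    Q.card ≤ n.choose s * (s ^ (k+1))^4 := by
  classical
  have hsub : Q ⊆ (Finset.univ.powersetCard s).biUnion
      (fun S : Finset (Fin n) => Fintype.piFinset fun _ : Fin 4 =>
        Fintype.piFinset fun _ : Fin (k+1) => S) := by
    intro q hq
    obtain ⟨S, hTS, _, hScard⟩ := Finset.exists_subsuperset_card_eq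
      (Finset.subset_univ (Finset.univ.biUnion fun c : Fin 4 => Finset.univ.image (q c)))
      (hQ q hq) (by simpa using hs)
    refine Finset.mem_biUnion.2 ⟨S, ?_, ?_⟩
    · exact Finset.mem_powersetCard_univ.2 hScard
    · refine Fintype.mem_piFinset.2 fun c => Fintype.mem_piFinset.2 fun i => ?_
      exact hTS (Finset.mem_biUnion.2 ⟨c, Finset.mem_univ _,
        Finset.mem_image.2 ⟨i, Finset.mem_univ _, rfl⟩⟩)
  calc Q.card ≤ _ := Finset.card_le_card hsub
    _ ≤ ∑ S ∈ Finset.univ.powersetCard s, (Fintype.piFinset fun _ : Fin 4 =>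
        Fintype.piFinset fun _ : Fin (k+1) => S).card := Finset.card_biUnion_le
    _ ≤ ∑ S ∈ Finset.univ.powersetCard s, (s ^ (k+1))^4 := by
        refine Finset.sum_le_sum fun S hS => ?_
        have hScard : S.card = s := Finset.mem_powersetCard_univ.1 hS
        simp [Fintype.card_piFinset, hScard]
    _ = (Finset.univ.powersetCard s).card * (s ^ (k+1))^4 := by
        rw [Finset.sum_const, smul_eq_mul]
    _ = n.choose s * (s ^ (k+1))^4 := by
        rw [Finset.card_powersetCard, Finset.card_univ, Fintype.card_fin]

lemma four_roots (Rel : Fin 4 → Fin 4 → Prop) (hrefl : ∀ c, Rel c c)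
    (hsymm : ∀ {a b}, Rel a b → Rel b a)
    (htrans : ∀ {a b c}, Rel a b → Rel b c → Rel a c)
    (hshare : ∀ c, ∃ c', c' ≠ c ∧ Rel c c') :
    ∃ r1 r2, ∀ c, Rel r1 c ∨ Rel r2 c := by
  by_cases hall : ∀ c, Rel 0 c
  · exact ⟨0, 0, fun c => Or.inl (hall c)⟩
  push_neg at hall
  obtain ⟨cs, hcs⟩ := hall
  refine ⟨0, cs, fun c => ?_⟩
  by_cases h0 : Rel 0 c
  · exact Or.inl h0
  right
  by_cases hcc : c = cs
  · subst hcc; exact hrefl _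
  obtain ⟨d, hdne, hd⟩ := hshare c
  by_cases hdcs : d = cs
  · exact hsymm (hdcs ▸ hd)
  obtain ⟨d', hd'ne, hd'⟩ := hshare cs
  by_cases hd'c : d' = c
  · exact hd'c ▸ hd'
  have hd0 : d ≠ 0 := fun h => h0 (hsymm (h ▸ hd))
  have hd'0 : d' ≠ 0 := fun h => hcs (hsymm (h ▸ hd'))
  have hc0 : c ≠ 0 := fun h => h0 (h ▸ hrefl 0)
  have hcs0 : cs ≠ 0 := fun h => hcs (h ▸ hrefl 0)
  have hdd' : d = d' := by
    have i1 := d.isLt; have i2 := d'.isLt; have i3 := c.isLt; have i4 := cs.isLt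
    simp only [ne_eq, Fin.ext_iff, Fin.val_zero] at hd0 hd'0 hc0 hcs0 hdne hdcs hd'ne hd'c hcc ⊢
    omega
  exact htrans hd' (hdd' ▸ hsymm hd)

lemma quad_vertices_le (k b n : ℕ) (hk : 1 ≤ k) (q : Fin 4 → Fin (k + 1) → Fin n)
    (hq : q ∈ quadCircuits k n b) :
    (Finset.univ.biUnion fun c : Fin 4 => Finset.univ.image (q c)).card ≤ b + 2 := by
  simp only [quadCircuits, Finset.mem_filter, Finset.mem_univ, true_and] at hq
  obtain ⟨h1, h2, h3, h4⟩ := hq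
  set E : Finset (Finset (Fin n)) := (Finset.univ : Finset (Fin 4)).biUnion
      (fun c => (Finset.Icc 1 k).image fun i => edgeOf (q c) i) with hE
  have hedge_mem : ∀ (c : Fin 4), ∀ i ∈ Finset.Icc 1 k, edgeOf (q c) i ∈ E := by
    intro c i hi
    exact Finset.mem_biUnion.2 ⟨c, Finset.mem_univ _,
      Finset.mem_image.2 ⟨i, hi, rfl⟩⟩
  have hcard2 : ∀ e ∈ E, e.card ≤ 2 := by
    intro e he
    obtain ⟨c, _, he2⟩ := Finset.mem_biUnion.1 he
    obtain ⟨i, _, rfl⟩ := Finset.mem_image.1 he2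
    exact le_trans (Finset.card_insert_le _ _) (by simp)
  -- reachability along a circuit
  have hcircuit : ∀ (c : Fin 4), ∀ i : ℕ, i ≤ k →
      Relation.ReflTransGen (estep E) (extFin (q c) 0) (extFin (q c) i) := by
    intro c i
    induction i with
    | zero => intro _; exact Relation.ReflTransGen.refl
    | succ i ih =>
      intro hik
      refine (ih (by omega)).tail ⟨edgeOf (q c) (i + 1),
        hedge_mem c (i + 1) (Finset.mem_Icc.2 ⟨by omega, hik⟩), ?_, ?_⟩
      · simp [edgeOf]
      · simp [edgeOf]
  -- cross-matching gives sharing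
  have hshare : ∀ c : Fin 4, ∃ c', c' ≠ c ∧
      Relation.ReflTransGen (estep E) (extFin (q c) 0) (extFin (q c') 0) := by
    intro c
    obtain ⟨i, hi, c', hc', i', hi', hedge⟩ := h3 c
    refine ⟨c', hc', ?_⟩
    have hik := (Finset.mem_Icc.1 hi).2
    have hik' := (Finset.mem_Icc.1 hi').2
    have step1 : estep E (extFin (q c) i) (extFin (q c') i') := by
      refine ⟨edgeOf (q c) i, hedge_mem c i hi, ?_, ?_⟩
      · simp [edgeOf]
      · rw [← hedge]; simp [edgeOf]
    exact ((hcircuit c i hik).tail step1).trans (reach_symm E (hcircuit c' i' hik'))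
  have hsymmR : ∀ {a b' : Fin 4},
      Relation.ReflTransGen (estep E) (extFin (q a) 0) (extFin (q b') 0) →
      Relation.ReflTransGen (estep E) (extFin (q b') 0) (extFin (q a) 0) :=
    fun h => reach_symm E h
  obtain ⟨r1, r2, hroots⟩ := four_roots
    (fun a b' => Relation.ReflTransGen (estep E) (extFin (q a) 0) (extFin (q b') 0))
    (fun _ => Relation.ReflTransGen.refl) hsymmR (fun h h' => h.trans h') hshare
  set R : Finset (Fin n) := {extFin (q r1) 0, extFin (q r2) 0} with hR
  have hreach : ∀ v ∈ E.sup id, ∃ r ∈ R, Relation.ReflTransGen (estep E) r v := by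
    intro v hv
    obtain ⟨e, he, hve⟩ := Finset.mem_sup.1 hv
    obtain ⟨c, _, he2⟩ := Finset.mem_biUnion.1 he
    obtain ⟨i, hi, rfl⟩ := Finset.mem_image.1 he2
    have hik := Finset.mem_Icc.1 hi
    have hvreach : Relation.ReflTransGen (estep E) (extFin (q c) 0) v := by
      simp only [edgeOf, id, Finset.mem_insert, Finset.mem_singleton] at hve
      rcases hve with rfl | rfl
      · exact hcircuit c (i - 1) (by omega)
      · exact hcircuit c i (by omega)
    rcases hroots c with hr | hr
    · exact ⟨extFin (q r1) 0, by simp [hR], hr.trans hvreach⟩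
    · exact ⟨extFin (q r2) 0, by simp [hR], hr.trans hvreach⟩
  have hmain := card_sup_le_aux E.card E rfl hcard2 R hreach
  have hRcard : R.card ≤ 2 := le_trans (Finset.card_insert_le _ _) (by simp)
  have hsupcard : (E.sup id).card ≤ b + 2 := by
    have h5 := Finset.card_le_card (Finset.subset_union_left (s₁ := E.sup id) (s₂ := R))
    omega
  refine le_trans (Finset.card_le_card ?_) hsupcard
  intro v hv
  obtain ⟨c, -, hv2⟩ := Finset.mem_biUnion.1 hv
  obtain ⟨i, -, rfl⟩ := Finset.mem_image.1 hv2
  have hext : extFin (q c) i.val = q c i := by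
    simp [extFin, Nat.mod_eq_of_lt i.isLt]
  by_cases hi0 : (i : ℕ) = 0
  · refine Finset.mem_sup.2 ⟨edgeOf (q c) 1,
      hedge_mem c 1 (Finset.mem_Icc.2 ⟨le_refl _, hk⟩), ?_⟩
    rw [← hext, hi0]
    simp [edgeOf]
  · refine Finset.mem_sup.2 ⟨edgeOf (q c) i.val,
      hedge_mem c i.val (Finset.mem_Icc.2 ⟨by omega, by have := i.isLt; omega⟩), ?_⟩
    rw [← hext]
    simp [edgeOf]


/-- **Lemma.** The number `Q_{k,4}^b` of quadruples of jointly matched and cross matched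
circuits of length `k` into `{1, …, n}` with exactly `b` distinct edges is at most
`C n^{b+2}` for a constant `C` independent of `n`. -/
theorem quad_circuit_count_bound (k b : ℕ) (hk : 1 ≤ k) (hb1 : 1 ≤ b) (hb2 : b ≤ 2 * k) :
    ∃ C : ℝ, ∀ n : ℕ, ((quadCircuits k n b).card : ℝ) ≤ C * (n : ℝ) ^ (b + 2) := by
  refine ⟨(((b + 2) ^ ((k + 1) * 4) : ℕ) : ℝ), fun n => ?_⟩
  rcases Nat.eq_zero_or_pos n with rfl | hn
  · have hempty : quadCircuits k 0 b = ∅ :=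
      Finset.eq_empty_of_forall_notMem (fun q _ => (q 0 0).elim0)
    simp [hempty]
  · have hQ : ∀ q ∈ quadCircuits k n b,
        (Finset.univ.biUnion fun c : Fin 4 => Finset.univ.image (q c)).card ≤ min (b + 2) n := by
      intro q hq
      refine le_min (quad_vertices_le k b n hk q hq) ?_
      calc (Finset.univ.biUnion fun c : Fin 4 => Finset.univ.image (q c)).card
          ≤ (Finset.univ : Finset (Fin n)).card := Finset.card_le_univ _
        _ = n := by simp
    have hcount := count_bound k n (min (b + 2) n) (min_le_right _ _) (quadCircuits k n b) hQ
    have hnat : (quadCircuits k n b).card ≤ n ^ (b + 2) * (b + 2) ^ ((k + 1) * 4) := by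
      refine le_trans hcount (Nat.mul_le_mul ?_ ?_)
      · exact le_trans (Nat.choose_le_pow _ _) (Nat.pow_le_pow_right hn (min_le_left _ _))
      · rw [← pow_mul]
        exact Nat.pow_le_pow_left (min_le_left _ _) _
    calc ((quadCircuits k n b).card : ℝ)
        ≤ ((n ^ (b + 2) * (b + 2) ^ ((k + 1) * 4) : ℕ) : ℝ) := by exact_mod_cast hnat
      _ = _ := by push_cast; ring
end
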